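/- Let n ≥ 2 and i ≥ 0 be integers and let l be any integer. For every s > 0, the function w(s) = cosh(s)^i · sinh(s)^l (integer powers) satisfies w''(s) + (n−1)·coth(s)·w'(s) = (i+l+n−1)(i+l)·cosh(s)^i·sinh(s)^l − i(i−1)·cosh(s)^{i−2}·sinh(s)^l + l(l+n−2)·cosh(s)^i·sinh(s)^{l−2}. -/

import Mathlib

private lemma zpow_shift {a : ℝ} (ha : a ≠ 0) (m : ℤ) (k : ℕ) :
    a ^ (m + (k : ℤ)) = a ^ m * a ^ k := by
  rw [zpow_add₀ ha, zpow_natCast]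

private lemma hd1 (i l : ℤ) {t : ℝ} (ht : 0 < t) :
    HasDerivAt (fun t => Real.cosh t ^ i * Real.sinh t ^ l)
      ((i : ℝ) * Real.cosh t ^ (i - 1) * Real.sinh t ^ (l + 1)
        + (l : ℝ) * Real.cosh t ^ (i + 1) * Real.sinh t ^ (l - 1)) t := by
  have hc : Real.cosh t ≠ 0 := (Real.cosh_pos t).ne'
  have hsh : Real.sinh t ≠ 0 := (Real.sinh_pos_iff.2 ht).ne'
  have h1 : HasDerivAt (fun u => Real.cosh u ^ i)
      ((i : ℝ) * Real.cosh t ^ (i - 1) * Real.sinh t) t :=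
    (hasDerivAt_zpow i _ (Or.inl hc)).comp t (Real.hasDerivAt_cosh t)
  have h2 : HasDerivAt (fun u => Real.sinh u ^ l)
      ((l : ℝ) * Real.sinh t ^ (l - 1) * Real.cosh t) t :=
    (hasDerivAt_zpow l _ (Or.inl hsh)).comp t (Real.hasDerivAt_sinh t)
  have := h1.mul h2
  convert this using 1 <;> try rfl
  rw [zpow_add_one₀ hsh, zpow_add_one₀ hc]
  ring

private lemma deriv1 (i l : ℤ) {t : ℝ} (ht : 0 < t) :
    deriv (fun t => Real.cosh t ^ i * Real.sinh t ^ l) t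
      = (i : ℝ) * Real.cosh t ^ (i - 1) * Real.sinh t ^ (l + 1)
        + (l : ℝ) * Real.cosh t ^ (i + 1) * Real.sinh t ^ (l - 1) :=
  (hd1 i l ht).deriv

private lemma hd2 (i l : ℤ) {t : ℝ} (ht : 0 < t) :
    HasDerivAt (fun t => (i : ℝ) * Real.cosh t ^ (i - 1) * Real.sinh t ^ (l + 1)
        + (l : ℝ) * Real.cosh t ^ (i + 1) * Real.sinh t ^ (l - 1))
      ((i : ℝ) * ((i - 1 : ℝ) * Real.cosh t ^ (i - 2) * Real.sinh t ^ (l + 2)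
          + ((l : ℝ) + 1) * Real.cosh t ^ i * Real.sinh t ^ l)
        + (l : ℝ) * (((i : ℝ) + 1) * Real.cosh t ^ i * Real.sinh t ^ l
          + ((l : ℝ) - 1) * Real.cosh t ^ (i + 2) * Real.sinh t ^ (l - 2))) t := by
  have hc : Real.cosh t ≠ 0 := (Real.cosh_pos t).ne'
  have hsh : Real.sinh t ≠ 0 := (Real.sinh_pos_iff.2 ht).ne'
  have h1 : HasDerivAt (fun u => Real.cosh u ^ (i - 1))
      (((i : ℝ) - 1) * Real.cosh t ^ (i - 2) * Real.sinh t) t := by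
    have := (hasDerivAt_zpow (i - 1) _ (Or.inl hc)).comp t (Real.hasDerivAt_cosh t)
    convert this using 2 <;> (try rfl) <;> push_cast <;> ring_nf
  have h2 : HasDerivAt (fun u => Real.sinh u ^ (l + 1))
      (((l : ℝ) + 1) * Real.sinh t ^ l * Real.cosh t) t := by
    have := (hasDerivAt_zpow (l + 1) _ (Or.inl hsh)).comp t (Real.hasDerivAt_sinh t)
    convert this using 2 <;> (try rfl) <;> push_cast <;> ring_nf
  have h3 : HasDerivAt (fun u => Real.cosh u ^ (i + 1))
      (((i : ℝ) + 1) * Real.cosh t ^ i * Real.sinh t) t := by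
    have := (hasDerivAt_zpow (i + 1) _ (Or.inl hc)).comp t (Real.hasDerivAt_cosh t)
    convert this using 2 <;> (try rfl) <;> push_cast <;> ring_nf
  have h4 : HasDerivAt (fun u => Real.sinh u ^ (l - 1))
      (((l : ℝ) - 1) * Real.sinh t ^ (l - 2) * Real.cosh t) t := by
    have := (hasDerivAt_zpow (l - 1) _ (Or.inl hsh)).comp t (Real.hasDerivAt_sinh t)
    convert this using 2 <;> (try rfl) <;> push_cast <;> ring_nf
  have := ((h1.mul h2).const_mul (i : ℝ)).add ((h3.mul h4).const_mul (l : ℝ))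
  convert this using 1 <;> try rfl
  · funext x; simp only [Pi.add_apply, Pi.mul_apply]; ring
  have ec1 : Real.cosh t ^ (i - 1) = Real.cosh t ^ (i - 2) * Real.cosh t ^ (1 : ℕ) := by
    rw [show (i - 1 : ℤ) = i - 2 + ((1 : ℕ) : ℤ) from by push_cast; ring]
    exact zpow_shift hc _ _
  have ec2 : Real.cosh t ^ (i) = Real.cosh t ^ (i - 2) * Real.cosh t ^ (2 : ℕ) := by
    conv_lhs => rw [show (i : ℤ) = i - 2 + ((2 : ℕ) : ℤ) from by push_cast; ring]
    exact zpow_shift hc _ _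
  have ec3 : Real.cosh t ^ (i + 1) = Real.cosh t ^ (i - 2) * Real.cosh t ^ (3 : ℕ) := by
    rw [show (i + 1 : ℤ) = i - 2 + ((3 : ℕ) : ℤ) from by push_cast; ring]
    exact zpow_shift hc _ _
  have ec4 : Real.cosh t ^ (i + 2) = Real.cosh t ^ (i - 2) * Real.cosh t ^ (4 : ℕ) := by
    rw [show (i + 2 : ℤ) = i - 2 + ((4 : ℕ) : ℤ) from by push_cast; ring]
    exact zpow_shift hc _ _
  have eh1 : Real.sinh t ^ (l - 1) = Real.sinh t ^ (l - 2) * Real.sinh t ^ (1 : ℕ) := by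
    rw [show (l - 1 : ℤ) = l - 2 + ((1 : ℕ) : ℤ) from by push_cast; ring]
    exact zpow_shift hsh _ _
  have eh2 : Real.sinh t ^ (l) = Real.sinh t ^ (l - 2) * Real.sinh t ^ (2 : ℕ) := by
    conv_lhs => rw [show (l : ℤ) = l - 2 + ((2 : ℕ) : ℤ) from by push_cast; ring]
    exact zpow_shift hsh _ _
  have eh3 : Real.sinh t ^ (l + 1) = Real.sinh t ^ (l - 2) * Real.sinh t ^ (3 : ℕ) := by
    rw [show (l + 1 : ℤ) = l - 2 + ((3 : ℕ) : ℤ) from by push_cast; ring]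
    exact zpow_shift hsh _ _
  have eh4 : Real.sinh t ^ (l + 2) = Real.sinh t ^ (l - 2) * Real.sinh t ^ (4 : ℕ) := by
    rw [show (l + 2 : ℤ) = l - 2 + ((4 : ℕ) : ℤ) from by push_cast; ring]
    exact zpow_shift hsh _ _
  rw [ec4, eh4, ec3, eh3, ec2, eh2, ec1, eh1]
  ring

/-- The main computational identity in the Appendix (proof of Proposition `P:D_m`):
    for `w(s) = cosh^i(s) sinh^l(s)`,
    `w'' + (n-1) coth(s) w' = (i+l+n-1)(i+l) cosh^i sinh^l - i(i-1) cosh^{i-2} sinh^l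
      + l(l+n-2) cosh^i sinh^{l-2}`. -/
theorem stmt_4 (n i l : ℤ) (hn : 2 ≤ n) (hi : 0 ≤ i) (s : ℝ) (hs : 0 < s) :
    deriv (deriv (fun t => Real.cosh t ^ i * Real.sinh t ^ l)) s
      + ((n : ℝ) - 1) * (Real.cosh s / Real.sinh s)
        * deriv (fun t => Real.cosh t ^ i * Real.sinh t ^ l) s
    = ((i : ℝ) + (l : ℝ) + (n : ℝ) - 1) * ((i : ℝ) + (l : ℝ))
          * Real.cosh s ^ i * Real.sinh s ^ l
      - (i : ℝ) * ((i : ℝ) - 1) * Real.cosh s ^ (i - 2) * Real.sinh s ^ l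
      + (l : ℝ) * ((l : ℝ) + (n : ℝ) - 2) * Real.cosh s ^ i * Real.sinh s ^ (l - 2) := by
  have hc : (0 : ℝ) < Real.cosh s := Real.cosh_pos s
  have hsh : (0 : ℝ) < Real.sinh s := Real.sinh_pos_iff.2 hs
  have hcne := hc.ne'
  have hshne := hsh.ne'
  -- second derivative
  have heq : deriv (fun t => Real.cosh t ^ i * Real.sinh t ^ l)
      =ᶠ[nhds s] (fun t => (i : ℝ) * Real.cosh t ^ (i - 1) * Real.sinh t ^ (l + 1)
        + (l : ℝ) * Real.cosh t ^ (i + 1) * Real.sinh t ^ (l - 1)) := by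
    filter_upwards [Ioi_mem_nhds hs] with t ht
    exact deriv1 i l ht
  have h2 : deriv (deriv (fun t => Real.cosh t ^ i * Real.sinh t ^ l)) s
      = (i : ℝ) * ((i - 1 : ℝ) * Real.cosh s ^ (i - 2) * Real.sinh s ^ (l + 2)
          + ((l : ℝ) + 1) * Real.cosh s ^ i * Real.sinh s ^ l)
        + (l : ℝ) * (((i : ℝ) + 1) * Real.cosh s ^ i * Real.sinh s ^ l
          + ((l : ℝ) - 1) * Real.cosh s ^ (i + 2) * Real.sinh s ^ (l - 2)) := by
    rw [heq.deriv_eq]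
    exact (hd2 i l hs).deriv
  rw [h2, deriv1 i l hs]
  have key : Real.cosh s ^ 2 = Real.sinh s ^ 2 + 1 := Real.cosh_sq s
  have ec1 : Real.cosh s ^ (i - 1) = Real.cosh s ^ (i - 2) * Real.cosh s ^ (1 : ℕ) := by
    rw [show (i - 1 : ℤ) = i - 2 + ((1 : ℕ) : ℤ) from by push_cast; ring]
    exact zpow_shift hcne _ _
  have ec2 : Real.cosh s ^ (i) = Real.cosh s ^ (i - 2) * Real.cosh s ^ (2 : ℕ) := by
    conv_lhs => rw [show (i : ℤ) = i - 2 + ((2 : ℕ) : ℤ) from by push_cast; ring]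
    exact zpow_shift hcne _ _
  have ec3 : Real.cosh s ^ (i + 1) = Real.cosh s ^ (i - 2) * Real.cosh s ^ (3 : ℕ) := by
    rw [show (i + 1 : ℤ) = i - 2 + ((3 : ℕ) : ℤ) from by push_cast; ring]
    exact zpow_shift hcne _ _
  have ec4 : Real.cosh s ^ (i + 2) = Real.cosh s ^ (i - 2) * Real.cosh s ^ (4 : ℕ) := by
    rw [show (i + 2 : ℤ) = i - 2 + ((4 : ℕ) : ℤ) from by push_cast; ring]
    exact zpow_shift hcne _ _
  have eh1 : Real.sinh s ^ (l - 1) = Real.sinh s ^ (l - 2) * Real.sinh s ^ (1 : ℕ) := by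
    rw [show (l - 1 : ℤ) = l - 2 + ((1 : ℕ) : ℤ) from by push_cast; ring]
    exact zpow_shift hshne _ _
  have eh2 : Real.sinh s ^ (l) = Real.sinh s ^ (l - 2) * Real.sinh s ^ (2 : ℕ) := by
    conv_lhs => rw [show (l : ℤ) = l - 2 + ((2 : ℕ) : ℤ) from by push_cast; ring]
    exact zpow_shift hshne _ _
  have eh3 : Real.sinh s ^ (l + 1) = Real.sinh s ^ (l - 2) * Real.sinh s ^ (3 : ℕ) := by
    rw [show (l + 1 : ℤ) = l - 2 + ((3 : ℕ) : ℤ) from by push_cast; ring]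
    exact zpow_shift hshne _ _
  have eh4 : Real.sinh s ^ (l + 2) = Real.sinh s ^ (l - 2) * Real.sinh s ^ (4 : ℕ) := by
    rw [show (l + 2 : ℤ) = l - 2 + ((4 : ℕ) : ℤ) from by push_cast; ring]
    exact zpow_shift hshne _ _
  rw [ec4, eh4, ec3, eh3, ec2, eh2, ec1, eh1]
  set C := Real.cosh s ^ (i - 2) with hC
  set H := Real.sinh s ^ (l - 2) with hH
  set c := Real.cosh s
  set h := Real.sinh s
  field_simp
  linear_combination (C * H * ((l : ℝ) * ((l : ℝ) + (n : ℝ) - 2) * c ^ 2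
    - (i : ℝ) * ((i : ℝ) - 1) * h ^ 2)) * key
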